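/- Let ℓ > 0, let ℬ ⊆ (ℤ/2)^ℓ be linearly independent over ℤ/2, and let b* ∈ ℬ. Suppose ρ⁰_i, ρ¹_i ∈ (ℬ ∪ (b* + ℬ)) \ {0, b*} for i < 3 are such that (a) there are no repetitions in the sequence ⟨ρ⁰_i, ρ¹_i : i < 3⟩ (six distinct elements), and (b) ρ⁰_i + ρ¹_i = ρ⁰_j + ρ¹_j for all i < j < 3. Then every pair {ρ⁰_i, ρ¹_i} is of the form {b, b + b*} for some b ∈ ℬ with b ≠ b*. -/

import Mathlib

open scoped Pointwise

private lemma addself {ℓ : ℕ} (v : Fin ℓ → ZMod 2) : v + v = 0 := by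
  funext i
  exact (by decide : ∀ x : ZMod 2, x + x = 0) (v i)

section helpers
variable {ℓ : ℕ} {ℬ : Set (Fin ℓ → ZMod 2)}
  (hB : LinearIndependent (ZMod 2) ((↑) : ℬ → (Fin ℓ → ZMod 2)))

include hB

private lemma zsum (s : Finset (Fin ℓ → ZMod 2)) (hs : ↑s ⊆ ℬ)
    (h0 : ∑ x ∈ s, x = 0) : s = ∅ := by
  by_contra hne
  obtain ⟨a, ha⟩ := Finset.nonempty_iff_ne_empty.mpr hne
  have li : LinearIndependent (ZMod 2) ((↑) : (↑s : Set (Fin ℓ → ZMod 2)) → (Fin ℓ → ZMod 2)) :=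
    LinearIndepOn.mono (v := id) hB hs
  rw [Fintype.linearIndependent_iff] at li
  have := li (fun _ => 1) ?_ ⟨a, ha⟩
  · exact one_ne_zero this
  · simp only [one_smul]
    exact (Finset.sum_finset_coe (fun x => x) s).trans h0

private lemma nz {a : Fin ℓ → ZMod 2} (ha : a ∈ ℬ) : a ≠ 0 := by
  intro h
  have := zsum hB {a} (by simpa using ha) (by simpa using h)
  simp at this

private lemma l2 {a b : Fin ℓ → ZMod 2} (ha : a ∈ ℬ) (hb : b ∈ ℬ)
    (h : a + b = 0) : a = b := by
  by_contra hab
  have := zsum hB {a, b} (by simp [Set.insert_subset_iff, ha, hb])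
    (by rwa [Finset.sum_pair hab])
  simp at this

private lemma l3 {a b c : Fin ℓ → ZMod 2} (ha : a ∈ ℬ) (hb : b ∈ ℬ) (hc : c ∈ ℬ)
    (h : a + b + c = 0) : False := by
  by_cases hab : a = b
  · refine nz hB hc ?_
    have : c + (b + b) = 0 := by rw [← h, hab]; ring
    rwa [addself, add_zero] at this
  by_cases hac : a = c
  · refine nz hB hb ?_
    have : b + (c + c) = 0 := by rw [← h, hac]; ring
    rwa [addself, add_zero] at this
  by_cases hbc : b = c
  · refine nz hB ha ?_
    have : a + (c + c) = 0 := by rw [← h, hbc]; ring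
    rwa [addself, add_zero] at this
  have := zsum hB {a, b, c}
    (by simp [Set.insert_subset_iff, ha, hb, hc])
    (by rw [Finset.sum_insert (by simp [hab, hac]), Finset.sum_pair hbc, ← add_assoc]; exact h)
  simp at this

private lemma l4 {a b c d : Fin ℓ → ZMod 2} (ha : a ∈ ℬ) (hb : b ∈ ℬ) (hc : c ∈ ℬ)
    (hd : d ∈ ℬ) (h : a + b + c + d = 0) :
    (a = b ∧ c = d) ∨ (a = c ∧ b = d) ∨ (a = d ∧ b = c) := by
  by_cases hab : a = b
  · refine Or.inl ⟨hab, l2 hB hc hd ?_⟩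
    have : c + d + (b + b) = 0 := by rw [← h, hab]; ring
    rwa [addself, add_zero] at this
  by_cases hac : a = c
  · refine Or.inr (Or.inl ⟨hac, l2 hB hb hd ?_⟩)
    have : b + d + (c + c) = 0 := by rw [← h, hac]; ring
    rwa [addself, add_zero] at this
  by_cases had : a = d
  · refine Or.inr (Or.inr ⟨had, l2 hB hb hc ?_⟩)
    have : b + c + (d + d) = 0 := by rw [← h, had]; ring
    rwa [addself, add_zero] at this
  by_cases hbc : b = c
  · exfalso; apply had; refine l2 hB ha hd ?_
    have : a + d + (c + c) = 0 := by rw [← h, hbc]; ring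
    rwa [addself, add_zero] at this
  by_cases hbd : b = d
  · exfalso; apply hac; refine l2 hB ha hc ?_
    have : a + c + (d + d) = 0 := by rw [← h, hbd]; ring
    rwa [addself, add_zero] at this
  by_cases hcd : c = d
  · exfalso; apply hab; refine l2 hB ha hb ?_
    have : a + b + (d + d) = 0 := by rw [← h, hcd]; ring
    rwa [addself, add_zero] at this
  exfalso
  have := zsum hB {a, b, c, d}
    (by simp [Set.insert_subset_iff, ha, hb, hc, hd])
    (by rw [Finset.sum_insert (by simp [hab, hac, had]),
            Finset.sum_insert (by simp [hbc, hbd]), Finset.sum_pair hcd,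
            ← add_assoc, ← add_assoc]
        exact h)
  simp at this

private lemma l5 {a b c d x : Fin ℓ → ZMod 2} (ha : a ∈ ℬ) (hb : b ∈ ℬ) (hc : c ∈ ℬ)
    (hd : d ∈ ℬ) (hx : x ∈ ℬ) (hax : a ≠ x) (hbx : b ≠ x) (hcx : c ≠ x) (hdx : d ≠ x)
    (h : a + b + c + d + x = 0) : False := by
  by_cases hab : a = b
  · refine l3 hB hc hd hx ?_
    have : c + d + x + (b + b) = 0 := by rw [← h, hab]; ring
    rwa [addself, add_zero] at this
  by_cases hac : a = c
  · refine l3 hB hb hd hx ?_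
    have : b + d + x + (c + c) = 0 := by rw [← h, hac]; ring
    rwa [addself, add_zero] at this
  by_cases had : a = d
  · refine l3 hB hb hc hx ?_
    have : b + c + x + (d + d) = 0 := by rw [← h, had]; ring
    rwa [addself, add_zero] at this
  by_cases hbc : b = c
  · refine l3 hB ha hd hx ?_
    have : a + d + x + (c + c) = 0 := by rw [← h, hbc]; ring
    rwa [addself, add_zero] at this
  by_cases hbd : b = d
  · refine l3 hB ha hc hx ?_
    have : a + c + x + (d + d) = 0 := by rw [← h, hbd]; ring
    rwa [addself, add_zero] at this
  by_cases hcd : c = d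
  · refine l3 hB ha hb hx ?_
    have : a + b + x + (d + d) = 0 := by rw [← h, hcd]; ring
    rwa [addself, add_zero] at this
  have := zsum hB {a, b, c, d, x}
    (by simp [Set.insert_subset_iff, ha, hb, hc, hd, hx])
    (by rw [Finset.sum_insert (by simp [hab, hac, had, hax]),
            Finset.sum_insert (by simp [hbc, hbd, hbx]),
            Finset.sum_insert (by simp [hcd, hcx]), Finset.sum_pair hdx,
            ← add_assoc, ← add_assoc, ← add_assoc]
        exact h)
  simp at this

end helpers

/-- Lemma 4.3(2): if ℬ ⊆ (ℤ/2)^ℓ is linearly independent, b* ∈ ℬ, and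
ρ⁰ᵢ, ρ¹ᵢ ∈ (ℬ ∪ (b* + ℬ)) \ {0, b*} (i < 3) are six pairwise distinct vectors with
ρ⁰ᵢ + ρ¹ᵢ constant, then each pair {ρ⁰ᵢ, ρ¹ᵢ} is {b, b + b*} for some b ∈ ℬ, b ≠ b*. -/
theorem stmt_3 (ℓ : ℕ) (hℓ : 0 < ℓ) (ℬ : Set (Fin ℓ → ZMod 2))
    (hB : LinearIndependent (ZMod 2) ((↑) : ℬ → (Fin ℓ → ZMod 2)))
    (bstar : Fin ℓ → ZMod 2) (hbstar : bstar ∈ ℬ)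
    (ρ : Fin 3 → Fin 2 → Fin ℓ → ZMod 2)
    (hmem : ∀ i : Fin 3, ∀ e : Fin 2,
      ρ i e ∈ (ℬ ∪ ((fun b => bstar + b) '' ℬ)) \ {0, bstar})
    (hinj : Function.Injective (fun p : Fin 3 × Fin 2 => ρ p.1 p.2))
    (hsum : ∀ i j : Fin 3, i < j → ρ i 0 + ρ i 1 = ρ j 0 + ρ j 1) :
    ∀ i : Fin 3, ∃ b ∈ ℬ, b ≠ bstar ∧
      ({ρ i 0, ρ i 1} : Set (Fin ℓ → ZMod 2)) = {b, b + bstar} := by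
  -- decomposition
  have hdec : ∀ (i : Fin 3) (e : Fin 2),
      ∃ ε : ZMod 2, ∃ b, b ∈ ℬ ∧ b ≠ bstar ∧ ρ i e = ε • bstar + b := by
    intro i e
    obtain ⟨h1, h2⟩ := hmem i e
    simp only [Set.mem_insert_iff, Set.mem_singleton_iff, not_or] at h2
    obtain ⟨hne0, hnebs⟩ := h2
    rcases h1 with hb | ⟨b, hbB, hEq⟩
    · exact ⟨0, ρ i e, hb, hnebs, by simp⟩
    · have hEq' : bstar + b = ρ i e := hEq
      refine ⟨1, b, hbB, ?_, by rw [← hEq', one_smul]⟩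
      intro hbb
      exact hne0 (by rw [← hEq', hbb]; exact addself bstar)
  choose ee bb hbbB hbbne hrho using hdec
  -- sum equal for all pairs
  have hsum' : ∀ i j : Fin 3, ρ i 0 + ρ i 1 = ρ j 0 + ρ j 1 := by
    intro i j
    rcases lt_trichotomy i j with h | h | h
    · exact hsum i j h
    · rw [h]
    · exact (hsum j i h).symm
  have hzm2 : ∀ x : ZMod 2, x = 0 ∨ x = 1 := by decide
  have hzne : ∀ x y : ZMod 2, x ≠ y → x = y + 1 := by decide
  -- key: four-term relation for i ≠ j
  have heq4 : ∀ i j : Fin 3,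
      (ee i 0 + ee i 1 + ee j 0 + ee j 1) • bstar
        + (bb i 0 + bb i 1 + bb j 0 + bb j 1) = 0 := by
    intro i j
    have h0 : ρ i 0 + ρ i 1 + (ρ j 0 + ρ j 1) = 0 := by
      rw [hsum' i j]; exact addself _
    rw [hrho i 0, hrho i 1, hrho j 0, hrho j 1] at h0
    rw [← h0]
    module
  -- if no index has equal base pair, contradiction
  have hne : ∀ (i j : Fin 3) (e f : Fin 2), ((i, e) : Fin 3 × Fin 2) ≠ (j, f) → ρ i e ≠ ρ j f :=
    fun i j e f hpq h => hpq (hinj h)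
  have key : (∀ k : Fin 3, bb k 0 ≠ bb k 1) → False := by
    intro hk
    have D : ∀ i j : Fin 3, i ≠ j →
        (ρ i 0 = ρ j 0 + bstar ∨ ρ i 0 = ρ j 1 + bstar) := by
      intro i j hij
      have h4 := heq4 i j
      rcases hzm2 (ee i 0 + ee i 1 + ee j 0 + ee j 1) with hE | hE
      · rw [hE, zero_smul, zero_add] at h4
        rcases l4 hB (hbbB i 0) (hbbB i 1) (hbbB j 0) (hbbB j 1) h4 with
          ⟨h1, _⟩ | ⟨h1, _⟩ | ⟨h1, _⟩
        · exact absurd h1 (hk i)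
        · by_cases hee : ee i 0 = ee j 0
          · exfalso
            have : ρ i 0 = ρ j 0 := by rw [hrho i 0, hrho j 0, h1, hee]
            have := hinj (a₁ := (i, 0)) (a₂ := (j, 0)) this
            exact hij (congrArg Prod.fst this)
          · left
            rw [hrho i 0, hrho j 0, h1, hzne _ _ hee, add_smul, one_smul]
            abel
        · by_cases hee : ee i 0 = ee j 1
          · exfalso
            have : ρ i 0 = ρ j 1 := by rw [hrho i 0, hrho j 1, h1, hee]
            have := hinj (a₁ := (i, 0)) (a₂ := (j, 1)) this
            exact hij (congrArg Prod.fst this)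
          · right
            rw [hrho i 0, hrho j 1, h1, hzne _ _ hee, add_smul, one_smul]
            abel
      · exfalso
        rw [hE, one_smul] at h4
        refine l5 hB (hbbB i 0) (hbbB i 1) (hbbB j 0) (hbbB j 1) hbstar
          (hbbne i 0) (hbbne i 1) (hbbne j 0) (hbbne j 1) ?_
        rw [← h4]; abel
    rcases D 0 1 (by decide) with h1 | h1 <;> rcases D 0 2 (by decide) with h2 | h2 <;>
    · have h3 := h1.symm.trans h2
      have h3' := add_right_cancel h3
      exact absurd h3' (hne _ _ _ _ (by decide))
  -- get index with equal base pair
  have hex : ∃ k : Fin 3, bb k 0 = bb k 1 := by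
    by_contra h
    push_neg at h
    exact key h
  obtain ⟨k, hkk⟩ := hex
  have hEk : ee k 0 + ee k 1 = 1 := by
    rcases hzm2 (ee k 0 + ee k 1) with hE | hE
    · exfalso
      have hee : ee k 0 = ee k 1 := by
        have := hzm2 (ee k 0); have := hzm2 (ee k 1)
        revert hE
        rcases hzm2 (ee k 0) with h | h <;> rcases hzm2 (ee k 1) with h' | h' <;>
          rw [h, h'] <;> intro hE <;> first | rfl | (exfalso; revert hE; decide)
      have hρ : ρ k 0 = ρ k 1 := by rw [hrho k 0, hrho k 1, hkk, hee]
      exact hne k k 0 1 (fun h => by have h2 := congrArg Prod.snd h; simp at h2) hρ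
    · exact hE
  have hsumk : ρ k 0 + ρ k 1 = bstar := by
    rw [hrho k 0, hrho k 1, hkk]
    have : ee k 0 • bstar + bb k 1 + (ee k 1 • bstar + bb k 1)
        = (ee k 0 + ee k 1) • bstar + (bb k 1 + bb k 1) := by module
    rw [this, hEk, one_smul, addself, add_zero]
  have hsall : ∀ i : Fin 3, ρ i 0 + ρ i 1 = bstar := fun i => (hsum' i k).trans hsumk
  intro i
  have hr1 : ρ i 1 = ρ i 0 + bstar := by
    rw [← hsall i, ← add_assoc, addself, zero_add]
  rcases hzm2 (ee i 0) with h0 | h0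
  · refine ⟨bb i 0, hbbB i 0, hbbne i 0, ?_⟩
    have hρ0 : ρ i 0 = bb i 0 := by rw [hrho i 0, h0, zero_smul, zero_add]
    rw [hρ0, hr1, hρ0]
  · refine ⟨bb i 0, hbbB i 0, hbbne i 0, ?_⟩
    have hρ0 : ρ i 0 = bstar + bb i 0 := by rw [hrho i 0, h0, one_smul]
    have hρ1 : ρ i 1 = bb i 0 := by
      rw [hr1, hρ0, add_comm bstar (bb i 0), add_assoc, addself, add_zero]
    rw [hρ0, hρ1, Set.pair_comm, add_comm]
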